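/- Fix a DMC W with capacity C and capacity-achieving output distribution P_Y^*, fix 0 < ε < 1, and let a sequence of (n, M_n, ε)_{max,det} codes be capacity-achieving, i.e. (1/n) log M_n → C as n → ∞. For each n let P_{X^n Y^n} be the joint law of a uniformly chosen codeword X^n and the corresponding channel output Y^n, let P_{X^n}, P_{Y^n} be its marginals, and let I(X^n;Y^n) = D(P_{X^n Y^n} ‖ P_{X^n} × P_{Y^n}). Then (1/n) I(X^n;Y^n) → C if and only if (1/n) D(P_{Y^n} ‖ (P_Y^*)^n) → 0. -/

import Mathlib

open Filter

/-- Discrete relative entropy between two probability mass functions on a finite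
alphabet (with the usual conventions `0 log 0 = 0`, and dropping terms where the
second argument vanishes — these never occur under absolute continuity). -/
noncomputable def dKL {α : Type*} [Fintype α] (p q : α → ℝ) : ℝ :=
  ∑ a, p a * Real.log (p a / q a)

/-- `p` is a probability mass function on a finite alphabet. -/
def IsPMF {α : Type*} [Fintype α] (p : α → ℝ) : Prop :=
  (∀ a, 0 ≤ p a) ∧ ∑ a, p a = 1

/-- A discrete memoryless channel: a stochastic matrix. -/
def IsDMC {𝒳 𝒴 : Type*} [Fintype 𝒳] [Fintype 𝒴] (W : 𝒳 → 𝒴 → ℝ) : Prop :=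
  ∀ x, IsPMF (W x)

/-- Output distribution `pW` induced by input distribution `p`. -/
noncomputable def outDist {𝒳 𝒴 : Type*} [Fintype 𝒳] [Fintype 𝒴]
    (p : 𝒳 → ℝ) (W : 𝒳 → 𝒴 → ℝ) : 𝒴 → ℝ :=
  fun y => ∑ x, p x * W x y

/-- Capacity of a DMC: `C = max_p ∑_x p(x) D(W(·|x) ‖ pW)`. -/
noncomputable def capacity {𝒳 𝒴 : Type*} [Fintype 𝒳] [Fintype 𝒴]
    (W : 𝒳 → 𝒴 → ℝ) : ℝ :=
  sSup { r | ∃ p : 𝒳 → ℝ, IsPMF p ∧ r = ∑ x, p x * dKL (W x) (outDist p W) }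

/-- The blocklength-`n` memoryless extension of `W`: `P_{Y^n|X^n=x}(y) = ∏ᵢ W(yᵢ|xᵢ)`. -/
noncomputable def prodW {𝒳 𝒴 : Type*} [Fintype 𝒳] [Fintype 𝒴]
    (W : 𝒳 → 𝒴 → ℝ) (n : ℕ) : (Fin n → 𝒳) → (Fin n → 𝒴) → ℝ :=
  fun x y => ∏ i, W (x i) (y i)

/-- Output pmf `P_{Y^n}` induced by the codebook `c` (uniform messages). -/
noncomputable def codeOut {𝒳 𝒴 : Type*} [Fintype 𝒳] [Fintype 𝒴]
    (W : 𝒳 → 𝒴 → ℝ) {n M : ℕ} (c : Fin M → Fin n → 𝒳) : (Fin n → 𝒴) → ℝ :=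
  fun y => (M : ℝ)⁻¹ * ∑ j, prodW W n (c j) y

/-- Joint pmf `P_{X^n Y^n}` of a uniformly chosen codeword and the channel output. -/
noncomputable def codeJoint {𝒳 𝒴 : Type*} [Fintype 𝒳] [Fintype 𝒴] [DecidableEq 𝒳]
    (W : 𝒳 → 𝒴 → ℝ) {n M : ℕ} (c : Fin M → Fin n → 𝒳) :
    (Fin n → 𝒳) × (Fin n → 𝒴) → ℝ :=
  fun z => (M : ℝ)⁻¹ * ∑ j, if c j = z.1 then prodW W n (c j) z.2 else 0

/-- Input pmf `P_{X^n}` of a uniformly chosen codeword. -/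
noncomputable def codeIn {𝒳 : Type*} [Fintype 𝒳] [DecidableEq 𝒳]
    {n M : ℕ} (c : Fin M → Fin n → 𝒳) : (Fin n → 𝒳) → ℝ :=
  fun x => (M : ℝ)⁻¹ * ∑ j, if c j = x then (1 : ℝ) else 0


open Real

section basics
variable {𝒳 𝒴 : Type*} [Fintype 𝒳] [Fintype 𝒴] {W : 𝒳 → 𝒴 → ℝ}

/-- KL nonnegativity under absolute continuity. -/
lemma dKL_nonneg {α : Type*} [Fintype α] {p q : α → ℝ} (hp : ∀ a, 0 ≤ p a)
    (hp1 : ∑ a, p a = 1) (hq : ∀ a, 0 ≤ q a) (hq1 : ∑ a, q a ≤ 1)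
    (habs : ∀ a, 0 < p a → 0 < q a) : 0 ≤ dKL p q := by
  have h1 : ∀ a : α, (if 0 < p a then p a - q a else 0) ≤ p a * Real.log (p a / q a) := by
    intro a
    by_cases h : 0 < p a
    · have hq' := habs a h
      have hlog : 1 - q a / p a ≤ Real.log (p a / q a) := by
        have := Real.one_sub_inv_le_log_of_pos (div_pos h hq')
        rwa [inv_div] at this
      have := mul_le_mul_of_nonneg_left hlog h.le
      rw [if_pos h]
      have hpa : p a ≠ 0 := ne_of_gt h
      calc p a - q a = p a * (1 - q a / p a) := by field_simp
        _ ≤ p a * Real.log (p a / q a) := this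
    · have hpa : p a = 0 := le_antisymm (not_lt.1 h) (hp a)
      simp [if_neg h, hpa]
  calc (0:ℝ) ≤ ∑ a, (if 0 < p a then p a - q a else 0) := by
        have e1 : ∑ a, (if 0 < p a then p a - q a else 0)
            = (∑ a, (if 0 < p a then p a else 0)) - ∑ a, (if 0 < p a then q a else 0) := by
          rw [← Finset.sum_sub_distrib]
          exact Finset.sum_congr rfl (fun a _ => by by_cases h : 0 < p a <;> simp [h])
        have e2 : ∑ a, (if 0 < p a then p a else 0) = 1 := by
          rw [← hp1]
          exact Finset.sum_congr rfl (fun a _ => by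
            by_cases h : 0 < p a
            · simp [h]
            · simp [h, le_antisymm (not_lt.1 h) (hp a)])
        have e3 : ∑ a, (if 0 < p a then q a else 0) ≤ 1 := by
          refine le_trans (Finset.sum_le_sum (fun a _ => ?_)) hq1
          by_cases h : 0 < p a <;> simp [h, hq a]
        rw [e1, e2]; linarith
    _ ≤ dKL p q := Finset.sum_le_sum (fun a _ => h1 a)

lemma outDist_nonneg {p : 𝒳 → ℝ} (hW : IsDMC W) (hp : IsPMF p) (b : 𝒴) :
    0 ≤ outDist p W b :=
  Finset.sum_nonneg fun x _ => mul_nonneg (hp.1 x) ((hW x).1 b)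

lemma outDist_pmf {p : 𝒳 → ℝ} (hW : IsDMC W) (hp : IsPMF p) : IsPMF (outDist p W) := by
  refine ⟨outDist_nonneg hW hp, ?_⟩
  unfold outDist
  rw [Finset.sum_comm]
  calc ∑ x, ∑ b, p x * W x b = ∑ x, p x * ∑ b, W x b := by
        exact Finset.sum_congr rfl fun x _ => (Finset.mul_sum _ _ _).symm
    _ = 1 := by simp only [(hW _).2, mul_one, hp.2]

/-- single-letter mutual information is at most `card 𝒴`. -/
lemma mutinfo_le_card (hW : IsDMC W) {p : 𝒳 → ℝ} (hp : IsPMF p) :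
    ∑ x, p x * dKL (W x) (outDist p W) ≤ (Fintype.card 𝒴 : ℝ) := by
  set q := outDist p W with hqdef
  have hq0 : ∀ b, 0 ≤ q b := outDist_nonneg hW hp
  have step1 : ∑ x, p x * dKL (W x) q
      ≤ ∑ b, q b * (if 0 < q b then Real.log (q b)⁻¹ else 0) := by
    have expand : ∑ x, p x * dKL (W x) q
        = ∑ b, ∑ x, p x * W x b * Real.log (W x b / q b) := by
      rw [Finset.sum_comm]
      refine Finset.sum_congr rfl fun x _ => ?_
      rw [dKL, Finset.mul_sum]
      exact Finset.sum_congr rfl fun b _ => by ring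
    rw [expand]
    refine Finset.sum_le_sum fun b _ => ?_
    have collapse : ∑ x, p x * W x b * (if 0 < q b then Real.log (q b)⁻¹ else 0)
        = q b * (if 0 < q b then Real.log (q b)⁻¹ else 0) := by
      rw [← Finset.sum_mul]; rfl
    rw [← collapse]
    refine Finset.sum_le_sum fun x _ => ?_
    rcases eq_or_lt_of_le (mul_nonneg (hp.1 x) ((hW x).1 b)) with h0 | hpos
    · rw [← h0]; simp
    · have hqb : 0 < q b := by
        refine lt_of_lt_of_le hpos ?_
        exact Finset.single_le_sum (fun x _ => mul_nonneg (hp.1 x) ((hW x).1 b))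
          (Finset.mem_univ x)
      have hWxb : 0 < W x b := by
        rcases (hp.1 x).lt_or_eq with h | h
        · rcases ((hW x).1 b).lt_or_eq with h' | h'
          · exact h'
          · exfalso; rw [← h'] at hpos; simp at hpos
        · exfalso; rw [← h] at hpos; simp at hpos
      rw [if_pos hqb]
      have hW1 : W x b ≤ 1 := by
        calc W x b ≤ ∑ b', W x b' :=
              Finset.single_le_sum (fun b' _ => (hW x).1 b') (Finset.mem_univ b)
          _ = 1 := (hW x).2
      have : Real.log (W x b / q b) ≤ Real.log (q b)⁻¹ := by
        rw [Real.log_div (ne_of_gt hWxb) (ne_of_gt hqb), Real.log_inv]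
        have : Real.log (W x b) ≤ 0 := Real.log_nonpos hWxb.le hW1
        linarith
      exact mul_le_mul_of_nonneg_left this (mul_nonneg (hp.1 x) ((hW x).1 b))
  refine step1.trans ?_
  calc ∑ b, q b * (if 0 < q b then Real.log (q b)⁻¹ else 0) ≤ ∑ _b : 𝒴, (1:ℝ) := by
        refine Finset.sum_le_sum fun b _ => ?_
        by_cases h : 0 < q b
        · rw [if_pos h]
          have := Real.log_le_sub_one_of_pos (inv_pos.2 h)
          have := mul_le_mul_of_nonneg_left this (hq0 b)
          have hne : q b ≠ 0 := ne_of_gt h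
          calc q b * Real.log (q b)⁻¹ ≤ q b * ((q b)⁻¹ - 1) := this
            _ = 1 - q b := by field_simp
            _ ≤ 1 := by linarith [hq0 b]
        · simp [if_neg h]
    _ = (Fintype.card 𝒴 : ℝ) := by simp
end basics

section capacityfacts
variable {𝒳 𝒴 : Type*} [Fintype 𝒳] [Fintype 𝒴] {W : 𝒳 → 𝒴 → ℝ} [DecidableEq 𝒳]

lemma phi_le_capacity (hW : IsDMC W) {p : 𝒳 → ℝ} (hp : IsPMF p) :
    ∑ x, p x * dKL (W x) (outDist p W) ≤ capacity W := by
  apply le_csSup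
  · refine ⟨(Fintype.card 𝒴 : ℝ), ?_⟩
    rintro r ⟨p', hp', rfl⟩
    exact mutinfo_le_card hW hp'
  · exact ⟨p, hp, rfl⟩

lemma mix_pmf {pstar : 𝒳 → ℝ} (hpstar : IsPMF pstar) (a : 𝒳) {t : ℝ}
    (h0 : 0 ≤ t) (h1 : t ≤ 1) :
    IsPMF (fun x => (1-t) * pstar x + t * (if x = a then 1 else 0)) := by
  constructor
  · intro x
    have h1 := hpstar.1 x
    by_cases h : x = a <;> simp [h] <;> nlinarith [hpstar.1 a, hpstar.1 x]
  · rw [Finset.sum_add_distrib, ← Finset.mul_sum, ← Finset.mul_sum, hpstar.2,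
      Finset.sum_ite_eq' Finset.univ a (fun _ => (1:ℝ))]
    simp

lemma mix_out {pstar : 𝒳 → ℝ} (a : 𝒳) (t : ℝ) :
    outDist (fun x => (1-t) * pstar x + t * (if x = a then 1 else 0)) W
      = fun b => (1-t) * outDist pstar W b + t * W a b := by
  funext b
  unfold outDist
  rw [show ∑ x, ((1-t) * pstar x + t * (if x = a then 1 else 0)) * W x b
      = ∑ x, ((1-t) * (pstar x * W x b) + t * (if x = a then W x b else 0)) from
    Finset.sum_congr rfl (fun x _ => by by_cases h : x = a <;> simp [h] <;> ring)]
  rw [Finset.sum_add_distrib, ← Finset.mul_sum, ← Finset.mul_sum,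
    Finset.sum_ite_eq' Finset.univ a (fun x => W x b)]
  simp

lemma phi_mix_split {pstar : 𝒳 → ℝ} (a : 𝒳) (t : ℝ) (R : 𝒴 → ℝ) :
    ∑ x, ((1-t) * pstar x + t * (if x = a then 1 else 0)) * dKL (W x) R
      = (1-t) * (∑ x, pstar x * dKL (W x) R) + t * dKL (W a) R := by
  rw [show ∑ x, ((1-t) * pstar x + t * (if x = a then 1 else 0)) * dKL (W x) R
      = ∑ x, ((1-t) * (pstar x * dKL (W x) R) + t * (if x = a then dKL (W x) R else 0)) from
    Finset.sum_congr rfl (fun x _ => by by_cases h : x = a <;> simp [h] <;> ring)]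
  rw [Finset.sum_add_distrib, ← Finset.mul_sum, ← Finset.mul_sum,
    Finset.sum_ite_eq' Finset.univ a (fun x => dKL (W x) R)]
  simp

set_option maxHeartbeats 800000 in
lemma support_pos (hW : IsDMC W) {pstar : 𝒳 → ℝ} (hpstar : IsPMF pstar)
    (hach : ∑ x, pstar x * dKL (W x) (outDist pstar W) = capacity W)
    {a : 𝒳} {b₀ : 𝒴} (hab : 0 < W a b₀) : 0 < outDist pstar W b₀ := by
  classical
  by_contra hq
  set Q := outDist pstar W with hQdef
  have hQ0 : ∀ b, 0 ≤ Q b := outDist_nonneg hW hpstar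
  have hQpmf : IsPMF Q := outDist_pmf hW hpstar
  have hQb0 : Q b₀ = 0 := le_antisymm (not_lt.1 hq) (hQ0 b₀)
  set w := W a b₀ with hwdef
  set Y := (Fintype.card 𝒴 : ℝ) with hYdef
  set C := capacity W with hCdef
  set K := C + 1 + Y with hKdef
  set t := min (1/2 : ℝ) (Real.exp (-((K + 1)/w))) with htdef
  have ht0 : 0 < t := lt_min (by norm_num) (Real.exp_pos _)
  have ht2 : t ≤ 1/2 := min_le_left _ _
  have ht1 : t ≤ 1 := le_trans ht2 (by norm_num)
  set p' := fun x => (1-t) * pstar x + t * (if x = a then 1 else 0) with hp'def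
  set Qt := fun b => (1-t) * Q b + t * W a b with hQtdef
  have hp' : IsPMF p' := mix_pmf hpstar a ht0.le ht1
  have hout : outDist p' W = Qt := mix_out a t
  have hub : ∑ x, p' x * dKL (W x) Qt ≤ C := by
    rw [← hout]; exact phi_le_capacity hW hp'
  set Rx : 𝒳 → ℝ := fun x => ∑ b, W x b * (W a b / Q b) with hRxdef
  -- positivity of Qt on the support of each W x for x in supp pstar
  have hQtpos : ∀ b, 0 < Q b → 0 < Qt b := by
    intro b hb
    have h1 : 0 < (1-t) * Q b := mul_pos (by linarith) hb
    have h2 : 0 ≤ t * W a b := mul_nonneg ht0.le ((hW a).1 b)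
    simp only [hQtdef]; linarith
  have hQt1 : ∀ b, Qt b ≤ 1 := by
    intro b
    have hQb1 : Q b ≤ 1 := by
      calc Q b ≤ ∑ b', Q b' := Finset.single_le_sum (fun b' _ => hQ0 b') (Finset.mem_univ b)
        _ = 1 := hQpmf.2
    have hWab1 : W a b ≤ 1 := by
      calc W a b ≤ ∑ b', W a b' :=
            Finset.single_le_sum (fun b' _ => (hW a).1 b') (Finset.mem_univ b)
        _ = 1 := (hW a).2
    have := (hW a).1 b
    simp only [hQtdef]; nlinarith
  -- part 1 : lower bound for x in the support of pstar
  have part1 : ∀ x, 0 < pstar x → dKL (W x) Q - t * Rx x ≤ dKL (W x) Qt := by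
    intro x hx
    rw [dKL, dKL, hRxdef, Finset.mul_sum, ← Finset.sum_sub_distrib]
    refine Finset.sum_le_sum fun b _ => ?_
    rcases ((hW x).1 b).eq_or_lt with h0 | hWxb
    · simp [← h0]
    · have hQb : 0 < Q b := by
        calc (0:ℝ) < pstar x * W x b := mul_pos hx hWxb
          _ ≤ ∑ x', pstar x' * W x' b :=
            Finset.single_le_sum (fun x' _ => mul_nonneg (hpstar.1 x') ((hW x').1 b))
              (Finset.mem_univ x)
          _ = Q b := rfl
      have hQtb : 0 < Qt b := hQtpos b hQb
      have hlogQt : Real.log (Qt b) ≤ Real.log (Q b) + t * (W a b / Q b) := by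
        have hu : 0 ≤ t * (W a b / Q b) :=
          mul_nonneg ht0.le (div_nonneg ((hW a).1 b) hQb.le)
        have h1 : Qt b ≤ Q b * (1 + t * (W a b / Q b)) := by
          have : Q b * (1 + t * (W a b / Q b)) = Q b + t * W a b := by
            field_simp
          rw [this]; simp only [hQtdef]; nlinarith [hQb]
        calc Real.log (Qt b) ≤ Real.log (Q b * (1 + t * (W a b / Q b))) :=
              Real.log_le_log hQtb h1
          _ = Real.log (Q b) + Real.log (1 + t * (W a b / Q b)) :=
              Real.log_mul (ne_of_gt hQb) (by linarith)
          _ ≤ Real.log (Q b) + t * (W a b / Q b) := by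
              have := Real.log_le_sub_one_of_pos (show (0:ℝ) < 1 + t * (W a b / Q b) by linarith)
              linarith
      have e1 : Real.log (W x b / Q b) = Real.log (W x b) - Real.log (Q b) :=
        Real.log_div (ne_of_gt hWxb) (ne_of_gt hQb)
      have e2 : Real.log (W x b / Qt b) = Real.log (W x b) - Real.log (Qt b) :=
        Real.log_div (ne_of_gt hWxb) (ne_of_gt hQtb)
      rw [e1, e2]
      nlinarith [mul_le_mul_of_nonneg_left hlogQt hWxb.le]
  have hRsum : ∑ x, pstar x * Rx x ≤ 1 := by
    have e : ∑ x, pstar x * Rx x = ∑ b, (W a b / Q b) * Q b := by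
      rw [show ∑ x, pstar x * Rx x = ∑ x, ∑ b, (W a b / Q b) * (pstar x * W x b) from
        Finset.sum_congr rfl (fun x _ => by
          rw [hRxdef, Finset.mul_sum]; exact Finset.sum_congr rfl (fun b _ => by ring))]
      rw [Finset.sum_comm]
      exact Finset.sum_congr rfl (fun b _ => by rw [← Finset.mul_sum]; rfl)
    rw [e]
    calc ∑ b, (W a b / Q b) * Q b ≤ ∑ b, W a b := by
          refine Finset.sum_le_sum fun b _ => ?_
          rcases (hQ0 b).eq_or_lt with h | h
          · rw [← h]; simp [(hW a).1 b]
          · rw [div_mul_cancel₀ _ (ne_of_gt h)]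
      _ = 1 := (hW a).2
  have part2 : w * Real.log (1/t) - Y ≤ dKL (W a) Qt := by
    have hQtb₀ : Qt b₀ = t * w := by simp [hQtdef, hQb0, hwdef]
    have hterm : W a b₀ * Real.log (W a b₀ / Qt b₀) = w * Real.log (1/t) := by
      rw [hQtb₀, ← hwdef]
      have he : w / (t * w) = 1 / t := by
        rw [div_eq_div_iff (by positivity) (ne_of_gt ht0)]
        ring
      rw [he]
    have hrest : ∀ b ∈ Finset.univ.erase b₀, (-1:ℝ) ≤ W a b * Real.log (W a b / Qt b) := by
      intro b _
      rcases ((hW a).1 b).eq_or_lt with h0 | hWab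
      · simp [← h0]
      · rcases (show 0 ≤ Qt b from by
          simp only [hQtdef]
          have := hQ0 b; have := (hW a).1 b; nlinarith).eq_or_lt with hqt | hqt
        · rw [← hqt]; simp [div_zero]
        · have h1 : W a b ≤ W a b / Qt b := by
            rw [le_div_iff₀ hqt]; nlinarith [hQt1 b]
          have h2 : Real.log (W a b) ≤ Real.log (W a b / Qt b) := Real.log_le_log hWab h1
          have h3 : 1 - (W a b)⁻¹ ≤ Real.log (W a b) := Real.one_sub_inv_le_log_of_pos hWab
          have h4 : W a b * (1 - (W a b)⁻¹) = W a b - 1 := by field_simp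
          nlinarith [mul_le_mul_of_nonneg_left h2 hWab.le,
            mul_le_mul_of_nonneg_left h3 hWab.le]
    have hsum : dKL (W a) Qt
        = W a b₀ * Real.log (W a b₀ / Qt b₀)
          + ∑ b ∈ Finset.univ.erase b₀, W a b * Real.log (W a b / Qt b) := by
      rw [dKL, ← Finset.add_sum_erase _ _ (Finset.mem_univ b₀)]
    have hrest' : -Y ≤ ∑ b ∈ Finset.univ.erase b₀, W a b * Real.log (W a b / Qt b) := by
      calc -Y ≤ -((Finset.univ.erase b₀).card : ℝ) := by
            rw [neg_le_neg_iff]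
            have := Finset.card_erase_le (s := (Finset.univ : Finset 𝒴)) (a := b₀)
            rw [hYdef]
            exact_mod_cast le_trans this (le_of_eq (Finset.card_univ))
        _ = ∑ _b ∈ Finset.univ.erase b₀, (-1:ℝ) := by simp
        _ ≤ _ := Finset.sum_le_sum hrest
    rw [hsum, hterm]
    linarith
  -- assemble
  have hpart1' : (1-t) * (C - t) ≤ (1-t) * ∑ x, pstar x * dKL (W x) Qt := by
    have hs : ∑ x, pstar x * (dKL (W x) Q - t * Rx x) ≤ ∑ x, pstar x * dKL (W x) Qt := by
      refine Finset.sum_le_sum fun x _ => ?_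
      rcases (hpstar.1 x).eq_or_lt with h | h
      · rw [← h]; simp
      · exact mul_le_mul_of_nonneg_left (part1 x h) (hpstar.1 x)
    have hsplit2 : ∑ x, pstar x * (dKL (W x) Q - t * Rx x)
        = C - t * ∑ x, pstar x * Rx x := by
      rw [show ∑ x, pstar x * (dKL (W x) Q - t * Rx x)
          = ∑ x, (pstar x * dKL (W x) Q - t * (pstar x * Rx x)) from
        Finset.sum_congr rfl (fun x _ => by ring)]
      rw [Finset.sum_sub_distrib, ← Finset.mul_sum, hach]
    have h1 : C - t ≤ ∑ x, pstar x * dKL (W x) Qt := by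
      have := mul_le_mul_of_nonneg_left hRsum ht0.le
      rw [hsplit2] at hs
      linarith
    exact mul_le_mul_of_nonneg_left h1 (by linarith)
  have hfin : w * Real.log (1/t) ≤ K := by
    have hsplit := phi_mix_split (W := W) (pstar := pstar) a t Qt
    rw [hsplit] at hub
    have h2 : t * (w * Real.log (1/t) - Y) ≤ t * dKL (W a) Qt :=
      mul_le_mul_of_nonneg_left part2 ht0.le
    have h3 : (1-t) * (C - t) + t * (w * Real.log (1/t) - Y) ≤ C := by linarith
    have h4 : t * (w * Real.log (1/t)) ≤ t * (C + 1 + Y) := by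
      nlinarith [sq_nonneg t, ht0.le]
    rw [hKdef]
    exact le_of_mul_le_mul_left (by linarith [h4]) ht0
  -- contradiction
  have hL : (K+1)/w ≤ Real.log (1/t) := by
    have ht_le : t ≤ Real.exp (-((K+1)/w)) := min_le_right _ _
    have h1 : Real.exp ((K+1)/w) ≤ 1/t := by
      have h2 := one_div_le_one_div_of_le ht0 ht_le
      rwa [Real.exp_neg, one_div, inv_inv] at h2
    calc (K+1)/w = Real.log (Real.exp ((K+1)/w)) := (Real.log_exp _).symm
      _ ≤ Real.log (1/t) := Real.log_le_log (Real.exp_pos _) h1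
  have : K + 1 ≤ w * Real.log (1/t) := by
    rw [div_le_iff₀ hab] at hL
    linarith [hL]
  linarith

end capacityfacts

section kkt
variable {𝒳 𝒴 : Type*} [Fintype 𝒳] [Fintype 𝒴] {W : 𝒳 → 𝒴 → ℝ} [DecidableEq 𝒳]

set_option maxHeartbeats 800000 in
lemma dKL_le_capacity (hW : IsDMC W) {pstar : 𝒳 → ℝ} (hpstar : IsPMF pstar)
    (hach : ∑ x, pstar x * dKL (W x) (outDist pstar W) = capacity W) (a : 𝒳) :
    dKL (W a) (outDist pstar W) ≤ capacity W := by
  classical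
  by_contra hgt
  push_neg at hgt
  set Q := outDist pstar W with hQdef
  have hQ0 : ∀ b, 0 ≤ Q b := outDist_nonneg hW hpstar
  have hQpmf : IsPMF Q := outDist_pmf hW hpstar
  have hsupp : ∀ x b, 0 < W x b → 0 < Q b := fun x b h => support_pos hW hpstar hach h
  set C := capacity W with hCdef
  set m := dKL (W a) Q with hmdef
  set R := ∑ b, (W a b - Q b)^2 / Q b with hRdef
  have hR0 : 0 ≤ R :=
    Finset.sum_nonneg fun b _ => div_nonneg (sq_nonneg _) (hQ0 b)
  have hmC : 0 < m - C := by linarith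
  set t := min (1/2 : ℝ) ((m - C)/(2*(R+1))) with htdef
  have ht0 : 0 < t := lt_min (by norm_num) (by positivity)
  have ht2 : t ≤ 1/2 := min_le_left _ _
  have ht1 : t ≤ 1 := le_trans ht2 (by norm_num)
  set p' := fun x => (1-t) * pstar x + t * (if x = a then 1 else 0) with hp'def
  set Qt := fun b => (1-t) * Q b + t * W a b with hQtdef
  have hp' : IsPMF p' := mix_pmf hpstar a ht0.le ht1
  have hout : outDist p' W = Qt := mix_out a t
  have hQtpmf : IsPMF Qt := hout ▸ outDist_pmf hW hp'
  have hub : ∑ x, p' x * dKL (W x) Qt ≤ C := by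
    rw [← hout]; exact phi_le_capacity hW hp'
  have hQtQ : ∀ b, Qt b = Q b + t * (W a b - Q b) := fun b => by
    simp only [hQtdef]; ring
  have hQt0b : ∀ b, Q b = 0 → Qt b = 0 := by
    intro b hb
    have hWab : W a b = 0 := by
      by_contra h
      have := hsupp a b (lt_of_le_of_ne ((hW a).1 b) (Ne.symm h))
      rw [hb] at this; exact lt_irrefl 0 this
    simp [hQtdef, hb, hWab]
  have key : ∀ x, dKL (W x) Qt = dKL (W x) Q - ∑ b, W x b * Real.log (Qt b / Q b) := by
    intro x
    rw [dKL, dKL, ← Finset.sum_sub_distrib]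
    refine Finset.sum_congr rfl fun b _ => ?_
    rcases ((hW x).1 b).eq_or_lt with h0 | hWxb
    · simp [← h0]
    · have hQb : 0 < Q b := hsupp x b hWxb
      have hQtb : 0 < Qt b := by
        have h1 : 0 < (1-t) * Q b := mul_pos (by linarith) hQb
        have h2 : 0 ≤ t * W a b := mul_nonneg ht0.le ((hW a).1 b)
        simp only [hQtdef]; linarith
      rw [Real.log_div (ne_of_gt hWxb) (ne_of_gt hQtb),
          Real.log_div (ne_of_gt hWxb) (ne_of_gt hQb),
          Real.log_div (ne_of_gt hQtb) (ne_of_gt hQb)]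
      ring
  have hswap : ∑ x, p' x * ∑ b, W x b * Real.log (Qt b / Q b)
      = ∑ b, Qt b * Real.log (Qt b / Q b) := by
    rw [show ∑ x, p' x * ∑ b, W x b * Real.log (Qt b / Q b)
        = ∑ x, ∑ b, (p' x * W x b) * Real.log (Qt b / Q b) from
      Finset.sum_congr rfl fun x _ => by
        rw [Finset.mul_sum]; exact Finset.sum_congr rfl fun b _ => by ring]
    rw [Finset.sum_comm]
    refine Finset.sum_congr rfl fun b _ => ?_
    rw [← Finset.sum_mul]
    congr 1
    exact congrFun hout b
  have hphiQt : ∑ x, p' x * dKL (W x) Qt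
      = ((1-t) * C + t * m) - ∑ b, Qt b * Real.log (Qt b / Q b) := by
    calc ∑ x, p' x * dKL (W x) Qt
        = ∑ x, (p' x * dKL (W x) Q - p' x * ∑ b, W x b * Real.log (Qt b / Q b)) :=
          Finset.sum_congr rfl fun x _ => by rw [key x]; ring
      _ = ∑ x, p' x * dKL (W x) Q - ∑ b, Qt b * Real.log (Qt b / Q b) := by
          rw [Finset.sum_sub_distrib, hswap]
      _ = ((1-t) * C + t * m) - ∑ b, Qt b * Real.log (Qt b / Q b) := by
          rw [phi_mix_split (W := W) (pstar := pstar) a t Q, hach]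
  have hDelta : ∑ b, Qt b * Real.log (Qt b / Q b) ≤ t^2 * R := by
    have hsum0 : ∑ b, (Qt b - Q b) = 0 := by
      rw [Finset.sum_sub_distrib, hQtpmf.2, hQpmf.2, sub_self]
    calc ∑ b, Qt b * Real.log (Qt b / Q b)
        ≤ ∑ b, ((Qt b - Q b)^2 / Q b + (Qt b - Q b)) := by
          refine Finset.sum_le_sum fun b _ => ?_
          rcases (hQ0 b).eq_or_lt with h | hQb
          · have h0 : Qt b = 0 := hQt0b b h.symm
            simp [h0, ← h]
          · rcases (hQtpmf.1 b).eq_or_lt with hqt | hqt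
            · rw [← hqt]
              have : ((0:ℝ) - Q b)^2 / Q b + (0 - Q b) = 0 := by
                field_simp
                ring
              rw [this]; simp
            · have hlog : Real.log (Qt b / Q b) ≤ Qt b / Q b - 1 :=
                Real.log_le_sub_one_of_pos (div_pos hqt hQb)
              have heq : (Qt b - Q b)^2 / Q b + (Qt b - Q b) = Qt b * (Qt b / Q b - 1) := by
                field_simp; ring
              rw [heq]
              exact mul_le_mul_of_nonneg_left hlog hqt.le
      _ = t^2 * R := by
          rw [Finset.sum_add_distrib, hsum0, add_zero, hRdef, Finset.mul_sum]
          refine Finset.sum_congr rfl fun b _ => ?_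
          rw [hQtQ b]
          rcases (hQ0 b).eq_or_lt with h | hQb
          · rw [← h]; simp
          · field_simp; ring
  have hfin : (1-t)*C + t*m - t^2*R ≤ C := by
    rw [hphiQt] at hub; linarith
  have h5 : m - C ≤ t * R := by
    have h51 : t*(m-C) ≤ t*(t*R) := by nlinarith [sq_nonneg t]
    exact le_of_mul_le_mul_left h51 ht0
  have h6 : t * R ≤ (m - C)/(2*(R+1)) * R :=
    mul_le_mul_of_nonneg_right (min_le_right _ _) hR0
  have h7 : (m - C)/(2*(R+1)) * R < m - C := by
    rw [div_mul_eq_mul_div, div_lt_iff₀ (by positivity)]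
    nlinarith [hmC, hR0]
  linarith

end kkt

section tensor
variable {𝒳 𝒴 : Type*} [Fintype 𝒳] [Fintype 𝒴] {W : 𝒳 → 𝒴 → ℝ}

lemma sum_pi_prod {n : ℕ} (f : Fin n → 𝒴 → ℝ) :
    ∑ y : Fin n → 𝒴, ∏ i, f i (y i) = ∏ i, ∑ b, f i b :=
  (Fintype.prod_sum f).symm

lemma prodW_nonneg (hW : IsDMC W) {n : ℕ} (x : Fin n → 𝒳) (y : Fin n → 𝒴) :
    0 ≤ prodW W n x y :=
  Finset.prod_nonneg fun i _ => (hW _).1 _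

lemma prodW_sum (hW : IsDMC W) {n : ℕ} (x : Fin n → 𝒳) :
    ∑ y, prodW W n x y = 1 := by
  unfold prodW
  rw [sum_pi_prod (fun i b => W (x i) b)]
  simp [(hW _).2]

lemma master_sum (hW : IsDMC W) {n : ℕ} (x : Fin n → 𝒳) (φ : Fin n → 𝒴 → ℝ) :
    ∑ y : Fin n → 𝒴, prodW W n x y * ∏ i, φ i (y i)
      = ∏ i, ∑ b, W (x i) b * φ i b := by
  unfold prodW
  rw [show (∑ y : Fin n → 𝒴, (∏ i, W (x i) (y i)) * ∏ i, φ i (y i))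
      = ∑ y : Fin n → 𝒴, ∏ i, (W (x i) (y i) * φ i (y i)) from
    Finset.sum_congr rfl fun y _ => (Finset.prod_mul_distrib).symm]
  exact sum_pi_prod (fun i b => W (x i) b * φ i b)

lemma expect_one (hW : IsDMC W) {n : ℕ} (x : Fin n → 𝒳) (i₀ : Fin n) (F : 𝒴 → ℝ) :
    ∑ y : Fin n → 𝒴, prodW W n x y * F (y i₀) = ∑ b, W (x i₀) b * F b := by
  have h1 : ∀ y : Fin n → 𝒴, F (y i₀) = ∏ i, (if i = i₀ then F (y i) else 1) := by
    intro y
    rw [Finset.prod_ite_eq' Finset.univ i₀ (fun i => F (y i))]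
    simp
  calc ∑ y : Fin n → 𝒴, prodW W n x y * F (y i₀)
      = ∑ y : Fin n → 𝒴, prodW W n x y * ∏ i, (if i = i₀ then F (y i) else 1) :=
        Finset.sum_congr rfl fun y _ => by rw [← h1 y]
    _ = ∏ i, ∑ b, W (x i) b * (if i = i₀ then F b else 1) :=
        master_sum hW x (fun i b => if i = i₀ then F b else 1)
    _ = ∑ b, W (x i₀) b * F b := by
        rw [Finset.prod_eq_single i₀]
        · simp
        · intro i _ hne
          simp only [if_neg hne, mul_one]
          exact (hW (x i)).2
        · intro h; exact absurd (Finset.mem_univ i₀) h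

lemma expect_pair (hW : IsDMC W) {n : ℕ} (x : Fin n → 𝒳) {i₀ i₁ : Fin n}
    (hne : i₀ ≠ i₁) (F G : 𝒴 → ℝ) (hF : ∑ b, W (x i₀) b * F b = 0) :
    ∑ y : Fin n → 𝒴, prodW W n x y * (F (y i₀) * G (y i₁)) = 0 := by
  have h1 : ∀ y : Fin n → 𝒴, F (y i₀) * G (y i₁)
      = ∏ i, ((if i = i₀ then F (y i) else 1) * (if i = i₁ then G (y i) else 1)) := by
    intro y
    rw [Finset.prod_mul_distrib, Finset.prod_ite_eq' Finset.univ i₀ (fun i => F (y i)),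
      Finset.prod_ite_eq' Finset.univ i₁ (fun i => G (y i))]
    simp
  calc ∑ y : Fin n → 𝒴, prodW W n x y * (F (y i₀) * G (y i₁))
      = ∑ y : Fin n → 𝒴, prodW W n x y
          * ∏ i, ((if i = i₀ then F (y i) else 1) * (if i = i₁ then G (y i) else 1)) :=
        Finset.sum_congr rfl fun y _ => by rw [← h1 y]
    _ = ∏ i, ∑ b, W (x i) b * ((if i = i₀ then F b else 1) * (if i = i₁ then G b else 1)) :=
        master_sum hW x (fun i b => (if i = i₀ then F b else 1) * (if i = i₁ then G b else 1))
    _ = 0 := by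
        apply Finset.prod_eq_zero (Finset.mem_univ i₀)
        simp only [if_pos rfl, if_neg hne, mul_one]
        exact hF

lemma variance_eq (hW : IsDMC W) {n : ℕ} (x : Fin n → 𝒳) (F : Fin n → 𝒴 → ℝ)
    (hmean : ∀ i, ∑ b, W (x i) b * F i b = 0) :
    ∑ y : Fin n → 𝒴, prodW W n x y * (∑ i, F i (y i))^2
      = ∑ i, ∑ b, W (x i) b * (F i b)^2 := by
  have expand : ∀ y : Fin n → 𝒴, (∑ i, F i (y i))^2
      = ∑ i, ∑ k, F i (y i) * F k (y k) := by
    intro y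
    rw [sq, Finset.sum_mul_sum]
  calc ∑ y : Fin n → 𝒴, prodW W n x y * (∑ i, F i (y i))^2
      = ∑ y : Fin n → 𝒴, ∑ i, ∑ k, prodW W n x y * (F i (y i) * F k (y k)) := by
        refine Finset.sum_congr rfl fun y _ => ?_
        rw [expand y, Finset.mul_sum]
        exact Finset.sum_congr rfl fun i _ => Finset.mul_sum _ _ _
    _ = ∑ i, ∑ k, ∑ y : Fin n → 𝒴, prodW W n x y * (F i (y i) * F k (y k)) := by
        rw [Finset.sum_comm]
        exact Finset.sum_congr rfl fun i _ => Finset.sum_comm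
    _ = ∑ i, ∑ b, W (x i) b * (F i b)^2 := by
        refine Finset.sum_congr rfl fun i _ => ?_
        rw [Finset.sum_eq_single i]
        · simpa [sq] using expect_one hW x i (fun b => F i b * F i b)
        · intro k _ hki
          exact expect_pair hW x (Ne.symm hki) (F i) (F k) (hmean i)
        · intro h; exact absurd (Finset.mem_univ i) h
end tensor

section chainrules
variable {𝒳 𝒴 : Type*} [Fintype 𝒳] [Fintype 𝒴] {W : 𝒳 → 𝒴 → ℝ} [DecidableEq 𝒳]

lemma dKL_prodW (hW : IsDMC W) {Q : 𝒴 → ℝ}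
    (hsupp : ∀ a b, 0 < W a b → 0 < Q b) {n : ℕ} (x : Fin n → 𝒳) :
    dKL (prodW W n x) (fun y => ∏ i, Q (y i)) = ∑ i, dKL (W (x i)) Q := by
  rw [dKL]
  have key : ∀ y : Fin n → 𝒴, prodW W n x y * Real.log (prodW W n x y / ∏ i, Q (y i))
      = prodW W n x y * ∑ i, Real.log (W (x i) (y i) / Q (y i)) := by
    intro y
    rcases (prodW_nonneg hW x y).eq_or_lt with h0 | hpos
    · rw [← h0]; simp
    · have hfac : ∀ i, 0 < W (x i) (y i) := by
        intro i
        rcases ((hW (x i)).1 (y i)).eq_or_lt with h | h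
        · exfalso
          have : prodW W n x y = 0 :=
            Finset.prod_eq_zero (Finset.mem_univ i) h.symm
          rw [this] at hpos; exact lt_irrefl 0 hpos
        · exact h
      have hQi : ∀ i, 0 < Q (y i) := fun i => hsupp _ _ (hfac i)
      congr 1
      rw [show prodW W n x y / ∏ i, Q (y i) = ∏ i, (W (x i) (y i) / Q (y i)) from by
        rw [prodW, ← Finset.prod_div_distrib]]
      exact Real.log_prod (fun i _ => ne_of_gt (div_pos (hfac i) (hQi i)))
  rw [Finset.sum_congr rfl fun y _ => key y]
  rw [show (∑ y : Fin n → 𝒴, prodW W n x y * ∑ i, Real.log (W (x i) (y i) / Q (y i)))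
      = ∑ i, ∑ y : Fin n → 𝒴, prodW W n x y * Real.log (W (x i) (y i) / Q (y i)) from by
    rw [show (∑ y : Fin n → 𝒴, prodW W n x y * ∑ i, Real.log (W (x i) (y i) / Q (y i)))
        = ∑ y : Fin n → 𝒴, ∑ i, prodW W n x y * Real.log (W (x i) (y i) / Q (y i)) from
      Finset.sum_congr rfl fun y _ => Finset.mul_sum _ _ _]
    exact Finset.sum_comm]
  exact Finset.sum_congr rfl fun i _ =>
    expect_one hW x i (fun b => Real.log (W (x i) b / Q b))

variable {n M : ℕ} {c : Fin M → Fin n → 𝒳}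

lemma codeJoint_eq (z : (Fin n → 𝒳) × (Fin n → 𝒴)) :
    codeJoint W c z = codeIn c z.1 * prodW W n z.1 z.2 := by
  unfold codeJoint codeIn
  rw [show (∑ j, if c j = z.1 then prodW W n (c j) z.2 else 0)
      = (∑ j, if c j = z.1 then (1:ℝ) else 0) * prodW W n z.1 z.2 from by
    rw [Finset.sum_mul]
    refine Finset.sum_congr rfl fun j _ => ?_
    by_cases hj : c j = z.1 <;> simp [hj]]
  ring

lemma codeOut_eq (y : Fin n → 𝒴) :
    codeOut W c y = ∑ x, codeIn c x * prodW W n x y := by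
  unfold codeOut codeIn
  rw [show (∑ x, (M : ℝ)⁻¹ * (∑ j, if c j = x then (1:ℝ) else 0) * prodW W n x y)
      = (M : ℝ)⁻¹ * ∑ x, ∑ j, (if c j = x then prodW W n x y else 0) from by
    rw [Finset.mul_sum]
    refine Finset.sum_congr rfl fun x _ => ?_
    rw [mul_assoc]
    congr 1
    rw [Finset.sum_mul]
    exact Finset.sum_congr rfl fun j _ => by by_cases h : c j = x <;> simp [h]]
  congr 1
  rw [Finset.sum_comm]
  refine Finset.sum_congr rfl fun j _ => ?_
  rw [Finset.sum_ite_eq Finset.univ (c j) (fun x => prodW W n x y)]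
  simp

lemma regroup (f : (Fin n → 𝒳) → ℝ) :
    ∑ x, codeIn c x * f x = (M : ℝ)⁻¹ * ∑ j, f (c j) := by
  unfold codeIn
  rw [Finset.mul_sum]
  rw [show (∑ x, (M : ℝ)⁻¹ * (∑ j, if c j = x then (1:ℝ) else 0) * f x)
      = ∑ x, ∑ j, (M : ℝ)⁻¹ * (if c j = x then f x else 0) from
    Finset.sum_congr rfl fun x _ => by
      rw [mul_assoc, Finset.sum_mul, Finset.mul_sum]
      exact Finset.sum_congr rfl fun j _ => by by_cases h : c j = x <;> simp [h]]
  rw [Finset.sum_comm]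
  refine Finset.sum_congr rfl fun j _ => ?_
  rw [← Finset.mul_sum]
  congr 1
  rw [Finset.sum_ite_eq Finset.univ (c j) f]
  simp

lemma codeIn_nonneg (x : Fin n → 𝒳) : 0 ≤ codeIn c x := by
  unfold codeIn
  refine mul_nonneg (by positivity) (Finset.sum_nonneg fun j _ => ?_)
  by_cases h : c j = x <;> simp [h]

lemma codeIn_sum (hM : 0 < M) : ∑ x, codeIn c x = 1 := by
  have h : ∑ x, codeIn c x * (fun _ => (1:ℝ)) x = (M:ℝ)⁻¹ * ∑ _j : Fin M, (1:ℝ) :=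
    regroup _
  simp only [mul_one] at h
  rw [h]
  simp only [Finset.sum_const, Finset.card_univ, Fintype.card_fin, nsmul_eq_mul, mul_one]
  exact inv_mul_cancel₀ (Nat.cast_ne_zero.mpr hM.ne')

lemma codeOut_nonneg (hW : IsDMC W) (y : Fin n → 𝒴) : 0 ≤ codeOut W c y :=
  mul_nonneg (by positivity) (Finset.sum_nonneg fun j _ => prodW_nonneg hW _ _)

lemma codeOut_sum (hW : IsDMC W) (hM : 0 < M) : ∑ y, codeOut W c y = 1 := by
  unfold codeOut
  rw [← Finset.mul_sum, Finset.sum_comm]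
  rw [Finset.sum_congr rfl fun j (_ : j ∈ Finset.univ) => prodW_sum hW (c j)]
  simp only [Finset.sum_const, Finset.card_univ, Fintype.card_fin, nsmul_eq_mul, mul_one]
  exact inv_mul_cancel₀ (Nat.cast_ne_zero.mpr hM.ne')

/-- mutual information as an input-weighted KL sum. -/
lemma mutualInfo_eq (hW : IsDMC W) :
    dKL (codeJoint W c) (fun z => codeIn c z.1 * codeOut W c z.2)
      = ∑ x, codeIn c x * dKL (prodW W n x) (codeOut W c) := by
  rw [dKL, Fintype.sum_prod_type]
  refine Finset.sum_congr rfl fun x _ => ?_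
  rw [dKL, Finset.mul_sum]
  refine Finset.sum_congr rfl fun y _ => ?_
  rw [codeJoint_eq (x, y)]
  rcases (codeIn_nonneg (c := c) x).eq_or_lt with h0 | hpos
  · rw [← h0]; simp
  · have : codeIn c x * prodW W n x y / (codeIn c x * codeOut W c y)
        = prodW W n x y / codeOut W c y :=
      mul_div_mul_left _ _ (ne_of_gt hpos)
    rw [this]; ring

end chainrules

section chain2
variable {𝒳 𝒴 : Type*} [Fintype 𝒳] [Fintype 𝒴] {W : 𝒳 → 𝒴 → ℝ} [DecidableEq 𝒳]
variable {Q : 𝒴 → ℝ} {n M : ℕ} {c : Fin M → Fin n → 𝒳}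

lemma prodW_factor_pos (hW : IsDMC W) {x : Fin n → 𝒳} {y : Fin n → 𝒴}
    (hP : 0 < prodW W n x y) (i : Fin n) : 0 < W (x i) (y i) := by
  rcases ((hW (x i)).1 (y i)).eq_or_lt with h | h
  · exfalso
    have : prodW W n x y = 0 := Finset.prod_eq_zero (Finset.mem_univ i) h.symm
    rw [this] at hP; exact lt_irrefl 0 hP
  · exact h

lemma prodQ_pos (hW : IsDMC W) (hsupp : ∀ a b, 0 < W a b → 0 < Q b)
    {x : Fin n → 𝒳} {y : Fin n → 𝒴} (hP : 0 < prodW W n x y) :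
    0 < ∏ i, Q (y i) :=
  Finset.prod_pos fun i _ => hsupp (x i) (y i) (prodW_factor_pos hW hP i)

lemma chain_identity (hW : IsDMC W) (hsupp : ∀ a b, 0 < W a b → 0 < Q b) :
    ∑ x, codeIn c x * dKL (prodW W n x) (fun y => ∏ i, Q (y i))
      = dKL (codeJoint W c) (fun z => codeIn c z.1 * codeOut W c z.2)
        + dKL (codeOut W c) (fun y => ∏ i, Q (y i)) := by
  rw [mutualInfo_eq hW]
  have hOut : ∀ y, codeOut W c y = ∑ x, codeIn c x * prodW W n x y := codeOut_eq
  have per : ∀ (x : Fin n → 𝒳) (y : Fin n → 𝒴),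
      codeIn c x * (prodW W n x y * Real.log (prodW W n x y / ∏ i, Q (y i)))
      - codeIn c x * (prodW W n x y * Real.log (prodW W n x y / codeOut W c y))
      = (codeIn c x * prodW W n x y) * Real.log (codeOut W c y / ∏ i, Q (y i)) := by
    intro x y
    rcases (codeIn_nonneg (c := c) x).eq_or_lt with hI | hI
    · rw [← hI]; ring
    · rcases (prodW_nonneg hW x y).eq_or_lt with hP | hP
      · rw [← hP]; simp
      · have hOuty : 0 < codeOut W c y := by
          refine lt_of_lt_of_le (mul_pos hI hP) ?_
          rw [hOut y]
          exact Finset.single_le_sum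
            (fun x' _ => mul_nonneg (codeIn_nonneg x') (prodW_nonneg hW x' y))
            (Finset.mem_univ x)
        have hQn : 0 < ∏ i, Q (y i) := prodQ_pos hW hsupp hP
        rw [Real.log_div (ne_of_gt hP) (ne_of_gt hQn),
          Real.log_div (ne_of_gt hP) (ne_of_gt hOuty),
          Real.log_div (ne_of_gt hOuty) (ne_of_gt hQn)]
        ring
  have e1 : ∑ x, codeIn c x * dKL (prodW W n x) (fun y => ∏ i, Q (y i))
      - ∑ x, codeIn c x * dKL (prodW W n x) (codeOut W c)
      = ∑ y, codeOut W c y * Real.log (codeOut W c y / ∏ i, Q (y i)) := by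
    rw [← Finset.sum_sub_distrib]
    rw [show (∑ x, (codeIn c x * dKL (prodW W n x) (fun y => ∏ i, Q (y i))
        - codeIn c x * dKL (prodW W n x) (codeOut W c)))
        = ∑ x, ∑ y, (codeIn c x * prodW W n x y)
            * Real.log (codeOut W c y / ∏ i, Q (y i)) from
      Finset.sum_congr rfl fun x _ => by
        rw [dKL, dKL, Finset.mul_sum, Finset.mul_sum, ← Finset.sum_sub_distrib]
        exact Finset.sum_congr rfl fun y _ => per x y]
    rw [Finset.sum_comm]
    refine Finset.sum_congr rfl fun y _ => ?_
    rw [← Finset.sum_mul, ← hOut y]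
  have e2 : dKL (codeOut W c) (fun y => ∏ i, Q (y i))
      = ∑ y, codeOut W c y * Real.log (codeOut W c y / ∏ i, Q (y i)) := rfl
  rw [e2]
  linarith [e1]

lemma Sn_eq (hW : IsDMC W) (hsupp : ∀ a b, 0 < W a b → 0 < Q b) :
    ∑ x, codeIn c x * dKL (prodW W n x) (fun y => ∏ i, Q (y i))
      = (M:ℝ)⁻¹ * ∑ j, ∑ i, dKL (W (c j i)) Q := by
  rw [show (∑ x, codeIn c x * dKL (prodW W n x) (fun y => ∏ i, Q (y i)))
      = ∑ x, codeIn c x * ∑ i, dKL (W (x i)) Q from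
    Finset.sum_congr rfl fun x _ => by rw [dKL_prodW hW hsupp x]]
  exact regroup (fun x => ∑ i, dKL (W (x i)) Q)

lemma Sn_le {C : ℝ} (hdkl : ∀ a, dKL (W a) Q ≤ C) (hM : 0 < M) :
    (M:ℝ)⁻¹ * ∑ j : Fin M, ∑ i : Fin n, dKL (W (c j i)) Q ≤ n * C := by
  have h1 : ∀ j : Fin M, ∑ i : Fin n, dKL (W (c j i)) Q ≤ n * C := by
    intro j
    calc ∑ i : Fin n, dKL (W (c j i)) Q ≤ ∑ _i : Fin n, C :=
          Finset.sum_le_sum fun i _ => hdkl _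
      _ = n * C := by simp [Finset.card_univ, nsmul_eq_mul]
  calc (M:ℝ)⁻¹ * ∑ j : Fin M, ∑ i : Fin n, dKL (W (c j i)) Q
      ≤ (M:ℝ)⁻¹ * ∑ _j : Fin M, ((n : ℝ) * C) := by
        refine mul_le_mul_of_nonneg_left ?_ (by positivity)
        exact Finset.sum_le_sum fun j _ => h1 j
    _ = n * C := by
        simp only [Finset.sum_const, Finset.card_univ, Fintype.card_fin, nsmul_eq_mul]
        rw [← mul_assoc, inv_mul_cancel₀ (Nat.cast_ne_zero.mpr hM.ne'), one_mul]

lemma codeOut_pos_imp (hW : IsDMC W) {y : Fin n → 𝒴} (h : 0 < codeOut W c y) :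
    ∃ j, 0 < prodW W n (c j) y := by
  by_contra hno
  push_neg at hno
  have : ∀ j : Fin M, prodW W n (c j) y = 0 :=
    fun j => le_antisymm (hno j) (prodW_nonneg hW _ _)
  have : codeOut W c y = 0 := by
    unfold codeOut
    rw [Finset.sum_congr rfl fun j _ => this j]
    simp
  rw [this] at h; exact lt_irrefl 0 h

lemma Dn_nonneg (hW : IsDMC W) (hQpmf : IsPMF Q)
    (hsupp : ∀ a b, 0 < W a b → 0 < Q b) (hM : 0 < M) :
    0 ≤ dKL (codeOut W c) (fun y => ∏ i, Q (y i)) := by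
  refine dKL_nonneg (codeOut_nonneg hW) (codeOut_sum hW hM)
    (fun y => Finset.prod_nonneg fun i _ => hQpmf.1 _) ?_ ?_
  · rw [sum_pi_prod (fun _ b => Q b)]
    simp [hQpmf.2]
  · intro y hy
    obtain ⟨j, hj⟩ := codeOut_pos_imp hW hy
    exact prodQ_pos hW hsupp hj
end chain2

noncomputable def chanV {𝒳 𝒴 : Type*} [Fintype 𝒳] [Fintype 𝒴]
    (W : 𝒳 → 𝒴 → ℝ) (Q : 𝒴 → ℝ) : ℝ :=
  ∑ a, ∑ b, W a b * (Real.log (W a b / Q b) - dKL (W a) Q)^2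

section converse
variable {𝒳 𝒴 : Type*} [Fintype 𝒳] [Fintype 𝒴] {W : 𝒳 → 𝒴 → ℝ} [DecidableEq 𝒳]
variable {Q : 𝒴 → ℝ} {n M : ℕ} {c : Fin M → Fin n → 𝒳}

lemma chanV_nonneg (hW : IsDMC W) : 0 ≤ chanV W Q :=
  Finset.sum_nonneg fun a _ => Finset.sum_nonneg fun b _ =>
    mul_nonneg ((hW a).1 b) (sq_nonneg _)

lemma meanZ (hW : IsDMC W) (a : 𝒳) :
    ∑ b, W a b * (Real.log (W a b / Q b) - dKL (W a) Q) = 0 := by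
  rw [show (∑ b, W a b * (Real.log (W a b / Q b) - dKL (W a) Q))
      = ∑ b, (W a b * Real.log (W a b / Q b) - W a b * dKL (W a) Q) from
    Finset.sum_congr rfl fun b _ => by ring]
  rw [Finset.sum_sub_distrib, ← Finset.sum_mul, (hW a).2, one_mul]
  rw [show (∑ b, W a b * Real.log (W a b / Q b)) = dKL (W a) Q from rfl]
  exact sub_self _

set_option maxHeartbeats 1000000 in
lemma Sn_ge (hW : IsDMC W) (hQpmf : IsPMF Q)
    (hsupp : ∀ a b, 0 < W a b → 0 < Q b)
    {ε : ℝ} (hε1 : ε < 1) (hM : 0 < M)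
    (g : (Fin n → 𝒴) → Fin M → ℝ) (hg : ∀ y, IsPMF (g y))
    (herr : ∀ j, ∑ y, prodW W n (c j) y * (1 - g y j) ≤ ε)
    {lam : ℝ} (hlam0 : 0 < lam)
    (hlam2 : (n:ℝ) * chanV W Q / lam^2 ≤ (1-ε)/2) :
    Real.log M + Real.log ((1-ε)/2) - lam
      ≤ (M:ℝ)⁻¹ * ∑ j, ∑ i, dKL (W (c j i)) Q := by
  classical
  set V := chanV W Q with hVdef
  set Z : 𝒳 → 𝒴 → ℝ := fun a b => Real.log (W a b / Q b) with hZdef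
  set S : Fin M → ℝ := fun j => ∑ i, dKL (W (c j i)) Q with hSdef
  set LLR : Fin M → (Fin n → 𝒴) → ℝ := fun j y => ∑ i, Z (c j i) (y i) with hLdef
  have varj : ∀ j, ∑ y : Fin n → 𝒴, prodW W n (c j) y * (LLR j y - S j)^2
      ≤ (n:ℝ) * V := by
    intro j
    have hrw : ∀ y : Fin n → 𝒴, LLR j y - S j
        = ∑ i, (Z (c j i) (y i) - dKL (W (c j i)) Q) := by
      intro y; rw [hLdef, hSdef, ← Finset.sum_sub_distrib]
    rw [Finset.sum_congr rfl fun y _ => by rw [hrw y]]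
    rw [variance_eq hW (c j) (fun i b => Z (c j i) b - dKL (W (c j i)) Q)
      (fun i => meanZ hW (c j i))]
    calc ∑ i : Fin n, ∑ b, W (c j i) b * (Z (c j i) b - dKL (W (c j i)) Q)^2
        ≤ ∑ _i : Fin n, V := by
          refine Finset.sum_le_sum fun i _ => ?_
          refine Finset.single_le_sum (f := fun a => ∑ b, W a b * (Z a b - dKL (W a) Q)^2)
            (fun a _ => Finset.sum_nonneg fun b _ => mul_nonneg ((hW a).1 b) (sq_nonneg _))
            (Finset.mem_univ (c j i))
      _ = (n:ℝ) * V := by simp [Finset.card_univ, nsmul_eq_mul]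
  -- Chebyshev
  set Bad : Fin M → Finset (Fin n → 𝒴) :=
    fun j => Finset.univ.filter (fun y => S j + lam < LLR j y) with hBdef
  have cheb : ∀ j, ∑ y ∈ Bad j, prodW W n (c j) y ≤ (n:ℝ) * V / lam^2 := by
    intro j
    calc ∑ y ∈ Bad j, prodW W n (c j) y
        ≤ ∑ y ∈ Bad j, prodW W n (c j) y * (LLR j y - S j)^2 / lam^2 := by
          refine Finset.sum_le_sum fun y hy => ?_
          have hmem := Finset.mem_filter.mp hy
          have h1 : lam < LLR j y - S j := by linarith [hmem.2]
          have hP := prodW_nonneg hW (c j) y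
          have h2 : lam^2 ≤ (LLR j y - S j)^2 := by nlinarith
          rw [le_div_iff₀ (by positivity : (0:ℝ) < lam^2)]
          nlinarith [mul_le_mul_of_nonneg_left h2 hP]
      _ ≤ ∑ y : Fin n → 𝒴, prodW W n (c j) y * (LLR j y - S j)^2 / lam^2 := by
          refine Finset.sum_le_sum_of_subset_of_nonneg (Finset.filter_subset _ _)
            fun y _ _ => div_nonneg (mul_nonneg (prodW_nonneg hW _ _) (sq_nonneg _))
              (sq_nonneg _)
      _ = (∑ y : Fin n → 𝒴, prodW W n (c j) y * (LLR j y - S j)^2) / lam^2 := by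
          rw [← Finset.sum_div]
      _ ≤ (n:ℝ) * V / lam^2 :=
          (div_le_div_iff_of_pos_right (by positivity)).mpr (varj j)
  -- change of measure
  have chgm : ∀ j (y : Fin n → 𝒴), 0 < prodW W n (c j) y →
      (∏ i, Q (y i)) = prodW W n (c j) y * Real.exp (-(LLR j y)) := by
    intro j y hP
    have hfac : ∀ i : Fin n, Q (y i) = W (c j i) (y i) * Real.exp (-(Z (c j i) (y i))) := by
      intro i
      have hw := prodW_factor_pos hW hP i
      have hq := hsupp _ _ hw
      rw [hZdef]
      rw [Real.exp_neg, Real.exp_log (div_pos hw hq)]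
      field_simp
    calc (∏ i, Q (y i)) = ∏ i, (W (c j i) (y i) * Real.exp (-(Z (c j i) (y i)))) :=
          Finset.prod_congr rfl fun i _ => hfac i
      _ = (∏ i, W (c j i) (y i)) * ∏ i, Real.exp (-(Z (c j i) (y i))) :=
          Finset.prod_mul_distrib
      _ = prodW W n (c j) y * Real.exp (-(LLR j y)) := by
          rw [← Real.exp_sum]
          congr 1
          rw [hLdef, ← Finset.sum_neg_distrib]
  -- per-codeword output mass lower bound
  have tj_lb : ∀ j, Real.exp (-(S j + lam)) * ((1-ε)/2)
      ≤ ∑ y, (∏ i, Q (y i)) * g y j := by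
    intro j
    set Good : Finset (Fin n → 𝒴) :=
      Finset.univ.filter (fun y => ¬ (S j + lam < LLR j y)) with hGdef
    have hg0 : ∀ y j', 0 ≤ g y j' := fun y j' => (hg y).1 j'
    have hg1 : ∀ y j', g y j' ≤ 1 := by
      intro y j'
      calc g y j' ≤ ∑ j'', g y j'' :=
            Finset.single_le_sum (fun j'' _ => (hg y).1 j'') (Finset.mem_univ j')
        _ = 1 := (hg y).2
    have hQn0 : ∀ y : Fin n → 𝒴, 0 ≤ ∏ i, Q (y i) :=
      fun y => Finset.prod_nonneg fun i _ => hQpmf.1 _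
    have step1 : ∑ y ∈ Good, (Real.exp (-(S j + lam)) * prodW W n (c j) y) * g y j
        ≤ ∑ y, (∏ i, Q (y i)) * g y j := by
      refine le_trans (Finset.sum_le_sum ?_)
        (Finset.sum_le_sum_of_subset_of_nonneg (Finset.filter_subset _ _)
          (fun y _ _ => mul_nonneg (hQn0 y) (hg0 y j)))
      intro y hy
      have hmem := Finset.mem_filter.mp hy
      rcases (prodW_nonneg hW (c j) y).eq_or_lt with hP | hP
      · rw [← hP]
        simpa using mul_nonneg (hQn0 y) (hg0 y j)
      · rw [chgm j y hP]
        refine mul_le_mul_of_nonneg_right ?_ (hg0 y j)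
        rw [mul_comm (Real.exp (-(S j + lam))) _]
        refine mul_le_mul_of_nonneg_left (Real.exp_le_exp.mpr ?_) hP.le
        have := hmem.2
        push_neg at this
        linarith
    have step2 : (1-ε) - (n:ℝ) * V / lam^2 ≤ ∑ y ∈ Good, prodW W n (c j) y * g y j := by
      have hsplit : ∑ y ∈ Bad j, prodW W n (c j) y * g y j
          + ∑ y ∈ Good, prodW W n (c j) y * g y j
          = ∑ y, prodW W n (c j) y * g y j :=
        Finset.sum_filter_add_sum_filter_not Finset.univ
          (fun y => S j + lam < LLR j y) _
      have h1e : 1 - ε ≤ ∑ y, prodW W n (c j) y * g y j := by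
        have h2 := herr j
        have h3 : ∑ y, prodW W n (c j) y * (1 - g y j)
            = 1 - ∑ y, prodW W n (c j) y * g y j := by
          rw [show (∑ y, prodW W n (c j) y * (1 - g y j))
              = ∑ y, (prodW W n (c j) y - prodW W n (c j) y * g y j) from
            Finset.sum_congr rfl fun y _ => by ring]
          rw [Finset.sum_sub_distrib, prodW_sum hW (c j)]
        linarith
      have hbad : ∑ y ∈ Bad j, prodW W n (c j) y * g y j ≤ (n:ℝ) * V / lam^2 := by
        refine le_trans (Finset.sum_le_sum fun y _ => ?_) (cheb j)
        have := prodW_nonneg hW (c j) y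
        nlinarith [hg1 y j, hg0 y j]
      linarith
    calc Real.exp (-(S j + lam)) * ((1-ε)/2)
        ≤ Real.exp (-(S j + lam)) * ((1-ε) - (n:ℝ) * V / lam^2) := by
          refine mul_le_mul_of_nonneg_left (by linarith) (Real.exp_pos _).le
      _ ≤ Real.exp (-(S j + lam)) * ∑ y ∈ Good, prodW W n (c j) y * g y j := by
          refine mul_le_mul_of_nonneg_left step2 (Real.exp_pos _).le
      _ = ∑ y ∈ Good, (Real.exp (-(S j + lam)) * prodW W n (c j) y) * g y j := by
          rw [Finset.mul_sum]
          exact Finset.sum_congr rfl fun y _ => by ring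
      _ ≤ ∑ y, (∏ i, Q (y i)) * g y j := step1
  -- total auxiliary output mass is one
  have sum_tj : ∑ j, ∑ y, (∏ i, Q (y i)) * g y j = 1 := by
    rw [Finset.sum_comm]
    rw [show (∑ y : Fin n → 𝒴, ∑ j, (∏ i, Q (y i)) * g y j)
        = ∑ y : Fin n → 𝒴, ∏ i, Q (y i) from
      Finset.sum_congr rfl fun y _ => by rw [← Finset.mul_sum, (hg y).2, mul_one]]
    rw [sum_pi_prod (fun _ b => Q b)]
    simp [hQpmf.2]
  have key1 : ∑ j, Real.exp (-(S j + lam)) * ((1-ε)/2) ≤ 1 :=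
    le_trans (Finset.sum_le_sum fun j _ => tj_lb j) (le_of_eq sum_tj)
  have hA : (0:ℝ) < (1-ε)/2 := by linarith
  have e3 : ∑ j, Real.exp (-(S j + lam)) = Real.exp (-lam) * ∑ j, Real.exp (-(S j)) := by
    rw [Finset.mul_sum]
    refine Finset.sum_congr rfl fun j _ => ?_
    rw [← Real.exp_add]
    congr 1
    ring
  have hMR : (0:ℝ) < (M:ℝ) := by exact_mod_cast hM
  have jensen : (M:ℝ) * Real.exp (-((M:ℝ)⁻¹ * ∑ j, S j)) ≤ ∑ j, Real.exp (-(S j)) := by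
    have h := convexOn_exp.map_sum_le (t := Finset.univ)
      (w := fun _ : Fin M => (M:ℝ)⁻¹) (p := fun j => -(S j))
      (fun _ _ => by positivity)
      (by
        simp only [Finset.sum_const, Finset.card_univ, Fintype.card_fin, nsmul_eq_mul]
        exact mul_inv_cancel₀ (ne_of_gt hMR))
      (fun _ _ => Set.mem_univ _)
    simp only [smul_eq_mul] at h
    have h2 : ∑ j, (M:ℝ)⁻¹ * (-(S j)) = -((M:ℝ)⁻¹ * ∑ j, S j) := by
      rw [← Finset.mul_sum, Finset.sum_neg_distrib]
      ring
    rw [h2] at h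
    have h3 : ∑ j, (M:ℝ)⁻¹ * Real.exp (-(S j)) = (M:ℝ)⁻¹ * ∑ j, Real.exp (-(S j)) :=
      (Finset.mul_sum _ _ _).symm
    rw [h3] at h
    calc (M:ℝ) * Real.exp (-((M:ℝ)⁻¹ * ∑ j, S j))
        ≤ (M:ℝ) * ((M:ℝ)⁻¹ * ∑ j, Real.exp (-(S j))) :=
          mul_le_mul_of_nonneg_left h hMR.le
      _ = ∑ j, Real.exp (-(S j)) := by
          rw [← mul_assoc, mul_inv_cancel₀ (ne_of_gt hMR), one_mul]
  set Sb := (M:ℝ)⁻¹ * ∑ j, S j with hSbdef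
  have key2 : Real.exp (Real.log ((1-ε)/2) + Real.log M - lam - Sb) ≤ 1 := by
    have heq : Real.exp (Real.log ((1-ε)/2) + Real.log M - lam - Sb)
        = ((1-ε)/2) * ((M:ℝ) * (Real.exp (-lam) * Real.exp (-Sb))) := by
      rw [show Real.log ((1-ε)/2) + Real.log (M:ℝ) - lam - Sb
          = Real.log ((1-ε)/2) + (Real.log (M:ℝ) + (-lam + -Sb)) from by ring]
      rw [Real.exp_add, Real.exp_add, Real.exp_add, Real.exp_log hA, Real.exp_log hMR]
    rw [heq]
    have hc1 : ∑ j, Real.exp (-(S j + lam)) * ((1-ε)/2)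
        = ((1-ε)/2) * (Real.exp (-lam) * ∑ j, Real.exp (-(S j))) := by
      rw [← Finset.sum_mul, e3]
      ring
    rw [hc1] at key1
    have hexp : (M:ℝ) * Real.exp (-Sb) ≤ ∑ j, Real.exp (-(S j)) := jensen
    calc (1-ε)/2 * ((M:ℝ) * (Real.exp (-lam) * Real.exp (-Sb)))
        = ((1-ε)/2 * Real.exp (-lam)) * ((M:ℝ) * Real.exp (-Sb)) := by ring
      _ ≤ ((1-ε)/2 * Real.exp (-lam)) * ∑ j, Real.exp (-(S j)) :=
          mul_le_mul_of_nonneg_left hexp (mul_nonneg hA.le (Real.exp_pos _).le)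
      _ = (1-ε)/2 * (Real.exp (-lam) * ∑ j, Real.exp (-(S j))) := by ring
      _ ≤ 1 := key1
  have key3 : Real.log ((1-ε)/2) + Real.log M - lam - Sb ≤ 0 :=
    Real.exp_le_one_iff.mp key2
  linarith [key3]
end converse

/-- Theorem 4 of the paper: for a capacity-achieving sequence of
`(n, Mₙ, ε)_{max,det}` codes on a DMC, `(1/n) I(X^n;Y^n) → C` if and only if
`(1/n) D(P_{Y^n} ‖ (P_Y^*)^n) → 0`, where `I(X^n;Y^n) = D(P_{X^nY^n}‖P_{X^n}×P_{Y^n})`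
and `P_Y^*` is the capacity-achieving output distribution. -/
theorem mutual_info_iff_output_relEnt
    {𝒳 𝒴 : Type*} [Fintype 𝒳] [Fintype 𝒴] [DecidableEq 𝒳]
    (W : 𝒳 → 𝒴 → ℝ) (hW : IsDMC W)
    (pstar : 𝒳 → ℝ) (hpstar : IsPMF pstar)
    (hach : ∑ x, pstar x * dKL (W x) (outDist pstar W) = capacity W)
    (ε : ℝ) (hε0 : 0 < ε) (hε1 : ε < 1)
    (M : ℕ → ℕ) (hM : ∀ n, 0 < M n)
    (c : ∀ n, Fin (M n) → Fin n → 𝒳)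
    (g : ∀ n, (Fin n → 𝒴) → Fin (M n) → ℝ)
    (hg : ∀ n y, IsPMF (g n y))
    (herr : ∀ n (j : Fin (M n)), ∑ y, prodW W n (c n j) y * (1 - g n y j) ≤ ε)
    (hcap : Tendsto (fun n => Real.log (M n) / n) atTop (nhds (capacity W))) :
    Tendsto
      (fun n =>
        dKL (codeJoint W (c n))
          (fun z => codeIn (c n) z.1 * codeOut W (c n) z.2) / n)
      atTop (nhds (capacity W))
    ↔ Tendsto
        (fun n =>
          dKL (codeOut W (c n)) (fun y => ∏ i, outDist pstar W (y i)) / n)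
        atTop (nhds 0) := by
  
  classical
  set Q := outDist pstar W with hQdef
  set C := capacity W with hCdef
  have hQpmf : IsPMF Q := outDist_pmf hW hpstar
  have hsupp : ∀ a b, 0 < W a b → 0 < Q b := fun a b h => support_pos hW hpstar hach h
  have hdkl : ∀ a, dKL (W a) Q ≤ C := dKL_le_capacity hW hpstar hach
  set V := chanV W Q with hVdef
  have hV0 : 0 ≤ V := chanV_nonneg hW
  set I : ℕ → ℝ := fun n => dKL (codeJoint W (c n))
    (fun z => codeIn (c n) z.1 * codeOut W (c n) z.2) with hIdef
  set D : ℕ → ℝ := fun n => dKL (codeOut W (c n)) (fun y => ∏ i, Q (y i)) with hDdef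
  set S : ℕ → ℝ := fun n => (M n : ℝ)⁻¹ * ∑ j, ∑ i, dKL (W (c n j i)) Q with hSdef
  have hchain : ∀ n, S n = I n + D n := by
    intro n
    show (M n : ℝ)⁻¹ * ∑ j, ∑ i, dKL (W (c n j i)) Q
        = dKL (codeJoint W (c n)) (fun z => codeIn (c n) z.1 * codeOut W (c n) z.2)
          + dKL (codeOut W (c n)) (fun y => ∏ i, Q (y i))
    rw [← Sn_eq hW hsupp (c := c n)]
    exact chain_identity hW hsupp
  have hSle : ∀ n, S n ≤ n * C := fun n => Sn_le hdkl (hM n)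
  have hD0 : ∀ n, 0 ≤ D n := fun n => Dn_nonneg hW hQpmf hsupp (hM n)
  set lam : ℕ → ℝ := fun n => Real.sqrt (2 * ((n:ℝ) * V + 1) / (1-ε)) with hlamdef
  have hinner : ∀ n : ℕ, 0 < 2 * ((n:ℝ) * V + 1) / (1-ε) := by
    intro n
    apply div_pos
    · have : 0 ≤ (n:ℝ) * V := mul_nonneg (Nat.cast_nonneg n) hV0
      linarith
    · linarith
  have hlam0 : ∀ n, 0 < lam n := fun n => Real.sqrt_pos.mpr (hinner n)
  have hlam2 : ∀ n : ℕ, (n:ℝ) * V / (lam n)^2 ≤ (1-ε)/2 := by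
    intro n
    have hsq : (lam n)^2 = 2 * ((n:ℝ) * V + 1) / (1-ε) := Real.sq_sqrt (hinner n).le
    rw [hsq]
    have hu : 0 ≤ (n:ℝ) * V := mul_nonneg (Nat.cast_nonneg n) hV0
    rw [div_div_eq_mul_div]
    rw [div_le_div_iff₀ (by positivity) (by norm_num : (0:ℝ) < 2)]
    nlinarith [mul_nonneg hu (by linarith : (0:ℝ) ≤ 1-ε)]
  have hSge : ∀ n, Real.log (M n) + Real.log ((1-ε)/2) - lam n ≤ S n := by
    intro n
    exact Sn_ge hW hQpmf hsupp hε1 (hM n) (g n) (hg n) (herr n) (hlam0 n) (hlam2 n)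
  -- limit facts
  have hlam_lim : Tendsto (fun n : ℕ => lam n / n) atTop (nhds 0) := by
    have heq : ∀ n : ℕ, lam n / n = Real.sqrt (2 * ((n:ℝ) * V + 1) / (1-ε) / (n:ℝ)^2) := by
      intro n
      rw [hlamdef]
      rw [Real.sqrt_div (hinner n).le ((n:ℝ)^2)]
      rw [Real.sqrt_sq (Nat.cast_nonneg n)]
    have hf : Tendsto (fun n : ℕ => 2 * ((n:ℝ) * V + 1) / (1-ε) / (n:ℝ)^2) atTop (nhds 0) := by
      have hfe : ∀ n : ℕ, n ≠ 0 → 2 * ((n:ℝ) * V + 1) / (1-ε) / (n:ℝ)^2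
          = (2 * V / (1-ε)) / (n:ℝ) + (2 / (1-ε)) / (n:ℝ) / (n:ℝ) := by
        intro n hn
        have hnn : ((n:ℝ)) ≠ 0 := Nat.cast_ne_zero.mpr hn
        have h1e : (1:ℝ) - ε ≠ 0 := by linarith
        field_simp
      have l1 : Tendsto (fun n : ℕ => (2 * V / (1-ε)) / (n:ℝ)) atTop (nhds 0) :=
        tendsto_const_div_atTop_nhds_zero_nat _
      have l2 : Tendsto (fun n : ℕ => (2 / (1-ε)) / (n:ℝ) / (n:ℝ)) atTop (nhds 0) := by
        have l2a : Tendsto (fun n : ℕ => (2 / (1-ε)) / (n:ℝ)) atTop (nhds 0) :=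
          tendsto_const_div_atTop_nhds_zero_nat _
        have l2b : Tendsto (fun n : ℕ => ((n:ℝ))⁻¹) atTop (nhds 0) :=
          tendsto_inv_atTop_zero.comp tendsto_natCast_atTop_atTop
        have := l2a.mul l2b
        simpa [div_eq_mul_inv] using this
      have := l1.add l2
      rw [add_zero] at this
      apply this.congr'
      filter_upwards [eventually_ne_atTop 0] with n hn
      rw [hfe n hn]
    have := (Real.continuous_sqrt.tendsto 0).comp hf
    simp only [Real.sqrt_zero] at this
    exact this.congr fun n => (heq n).symm
  have hconst_lim : Tendsto (fun n : ℕ => Real.log ((1-ε)/2) / (n:ℝ)) atTop (nhds 0) :=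
    tendsto_const_div_atTop_nhds_zero_nat _
  have hIleC : ∀ᶠ n : ℕ in atTop, I n / n ≤ C := by
    filter_upwards [eventually_ge_atTop 1] with n hn
    have hn0 : (0:ℝ) < (n:ℝ) := by exact_mod_cast hn
    have h1 : I n ≤ (n:ℝ) * C := by
      have := hchain n
      have := hD0 n
      have := hSle n
      linarith
    calc I n / n ≤ ((n:ℝ) * C) / n := (div_le_div_iff_of_pos_right hn0).mpr h1
      _ = C := mul_div_cancel_left₀ _ (ne_of_gt hn0)
  constructor
  · -- I/n → C  ⟹  D/n → 0
    intro hIc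
    have hub : ∀ᶠ n : ℕ in atTop, D n / n ≤ C - I n / n := by
      filter_upwards [eventually_ge_atTop 1] with n hn
      have hn0 : (0:ℝ) < (n:ℝ) := by exact_mod_cast hn
      have h1 : D n ≤ (n:ℝ) * C - I n := by
        have := hchain n
        have := hSle n
        linarith
      calc D n / n ≤ ((n:ℝ) * C - I n) / n := (div_le_div_iff_of_pos_right hn0).mpr h1
        _ = C - I n / n := by
            rw [sub_div, mul_div_cancel_left₀ _ (ne_of_gt hn0)]
    have hlb : ∀ᶠ n : ℕ in atTop, 0 ≤ D n / n := by
      filter_upwards [eventually_ge_atTop 1] with n hn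
      have hn0 : (0:ℝ) < (n:ℝ) := by exact_mod_cast hn
      exact div_nonneg (hD0 n) hn0.le
    have hub_lim : Tendsto (fun n : ℕ => C - I n / n) atTop (nhds 0) := by
      have := (tendsto_const_nhds (x := C) (f := atTop)).sub hIc
      simpa using this
    exact tendsto_of_tendsto_of_tendsto_of_le_of_le' tendsto_const_nhds hub_lim hlb hub
  · -- D/n → 0  ⟹  I/n → C
    intro hDc
    have hlb : ∀ᶠ n : ℕ in atTop,
        Real.log (M n) / n + Real.log ((1-ε)/2) / n - lam n / n - D n / n ≤ I n / n := by
      filter_upwards [eventually_ge_atTop 1] with n hn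
      have hn0 : (0:ℝ) < (n:ℝ) := by exact_mod_cast hn
      have h1 : Real.log (M n) + Real.log ((1-ε)/2) - lam n - D n ≤ I n := by
        have := hchain n
        have := hSge n
        linarith
      have h2 := (div_le_div_iff_of_pos_right hn0).mpr h1
      calc Real.log (M n) / n + Real.log ((1-ε)/2) / n - lam n / n - D n / n
          = (Real.log (M n) + Real.log ((1-ε)/2) - lam n - D n) / n := by ring
        _ ≤ I n / n := h2
    have hlb_lim : Tendsto
        (fun n : ℕ => Real.log (M n) / n + Real.log ((1-ε)/2) / n - lam n / n - D n / n)
        atTop (nhds C) := by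
      have := ((hcap.add hconst_lim).sub hlam_lim).sub hDc
      simpa using this
    exact tendsto_of_tendsto_of_tendsto_of_le_of_le' hlb_lim tendsto_const_nhds hlb hIleC
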